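/- Let (M, c) be a gem with more than 4 vertices that has a 2-edge cut. Let c' be any colouring obtained from c by swapping the colours red and blue on a set of edges that is a union of connected components of the spanning subgraph formed by the red and blue edges (and leaving all other colours unchanged). Then there exist a connected component H1 of the spanning subgraph formed by the edges coloured red or yellow under c', and a connected component H2 of the spanning subgraph formed by the edges coloured blue or yellow under c', such that H1 and H2 share at least two edges. (In the embedding represented by the gem (M, c'), this says there is a bad vertex/face pair, so no partial dual of the original embedding is a closed 2-cell embedding.) -/

import Mathlib

/-- The three colours used in a gem. -/
inductive Colour : Type
  | red | yellow | blue
deriving DecidableEq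

/-- A proper edge colouring of a graph: two distinct edges sharing an endpoint
receive different colours. -/
def ProperEdgeColouring {V : Type*} {α : Type*} (G : SimpleGraph V) (c : Sym2 V → α) : Prop :=
  ∀ e₁ ∈ G.edgeSet, ∀ e₂ ∈ G.edgeSet, e₁ ≠ e₂ → (∃ v, v ∈ e₁ ∧ v ∈ e₂) → c e₁ ≠ c e₂

/-- A cubic graph: every vertex has degree 3. -/
def IsCubic {V : Type*} (G : SimpleGraph V) : Prop :=
  ∀ v : V, (G.neighborSet v).ncard = 3

/-- The edge cut determined by a vertex set `S`: the set of edges of `G`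
with exactly one endpoint in `S`. -/
def edgeCut {V : Type*} (G : SimpleGraph V) (S : Set V) : Set (Sym2 V) :=
  {e | ∃ u v, e = s(u, v) ∧ G.Adj u v ∧ u ∈ S ∧ v ∉ S}

/-- The spanning subgraph of `G` formed by the edges coloured `x` or `y`. -/
def twoColourSubgraph {V : Type*} {α : Type*} (G : SimpleGraph V) (c : Sym2 V → α)
    (x y : α) : SimpleGraph V where
  Adj u v := G.Adj u v ∧ (c s(u, v) = x ∨ c s(u, v) = y)
  symm := by
    refine ⟨fun u v h => ?_⟩
    refine ⟨h.1.symm, ?_⟩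
    rw [Sym2.eq_swap]
    exact h.2
  loopless := ⟨fun v h => G.loopless.irrefl v h.1⟩

/-- A gem: a connected cubic graph with a proper 3-edge-colouring (red, yellow,
blue) such that every connected component of the spanning subgraph formed by
the red and blue edges is a cycle of length 4 (equivalently, for a simple
graph: that subgraph is 2-regular and each of its connected components has
exactly 4 vertices). -/
structure IsGem {V : Type*} (M : SimpleGraph V) (c : Sym2 V → Colour) : Prop where
  connected : M.Connected
  cubic : IsCubic M
  proper : ProperEdgeColouring M c
  rb_two_regular : ∀ v : V,
    ((twoColourSubgraph M c Colour.red Colour.blue).neighborSet v).ncard = 2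
  rb_components_card4 : ∀ v : V,
    ((twoColourSubgraph M c Colour.red Colour.blue).connectedComponentMk v).supp.ncard = 4

/-- Exchange red and blue, leaving yellow fixed. -/
def swapColour : Colour → Colour
  | Colour.red => Colour.blue
  | Colour.blue => Colour.red
  | Colour.yellow => Colour.yellow

open Classical in
/-- The colouring obtained from `c` by swapping the colours red and blue on
every edge of `D` and leaving all other edges unchanged. -/
noncomputable def swapRB {V : Type*} (c : Sym2 V → Colour) (D : Set (Sym2 V)) :
    Sym2 V → Colour :=
  fun e => if e ∈ D then swapColour (c e) else c e

/-- `D` is a union of connected components of the red-blue spanning subgraph: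
every edge of `D` is a red-blue edge, and any two red-blue edges lying in the
same connected component of the red-blue subgraph are either both in `D` or
both outside `D`. -/
def UnionOfRBComponents {V : Type*} (M : SimpleGraph V) (c : Sym2 V → Colour)
    (D : Set (Sym2 V)) : Prop :=
  D ⊆ (twoColourSubgraph M c Colour.red Colour.blue).edgeSet ∧
  ∀ e₁ ∈ (twoColourSubgraph M c Colour.red Colour.blue).edgeSet,
    ∀ e₂ ∈ (twoColourSubgraph M c Colour.red Colour.blue).edgeSet,
      (∃ u v, u ∈ e₁ ∧ v ∈ e₂ ∧
        (twoColourSubgraph M c Colour.red Colour.blue).Reachable u v) →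
      (e₁ ∈ D ↔ e₂ ∈ D)

section Aux

open Finset

instance : Fintype Colour :=
  ⟨{Colour.red, Colour.yellow, Colour.blue}, fun x => by cases x <;> decide⟩

lemma colour_cover (x a b c : Colour) (hab : a ≠ b) (hac : a ≠ c) (hbc : b ≠ c) :
    x = a ∨ x = b ∨ x = c := by revert x a b c; decide

lemma exists_third (p q : Colour) : ∃ z : Colour, z ≠ p ∧ z ≠ q := by
  revert p q; decide

/-- classical degree -/
noncomputable def degc {V : Type*} [Fintype V] (H : SimpleGraph V) (v : V) : ℕ :=
  (@Finset.filter _ (fun u => H.Adj v u) (Classical.decPred _) Finset.univ).card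

lemma parity_core {V : Type*} [Fintype V] (H : SimpleGraph V) (T : Finset V) :
    Even ({p : V × V | p.1 ∈ T ∧ p.2 ∉ T ∧ H.Adj p.1 p.2}.ncard + ∑ u ∈ T, degc H u) := by
  classical
  set A : Finset (V × V) := Finset.univ.filter (fun p => p.1 ∈ T ∧ H.Adj p.1 p.2) with hA
  have hAcard : A.card = ∑ u ∈ T, degc H u := by
    rw [hA, Finset.card_filter, Fintype.sum_prod_type]
    have h1 : ∀ u : V, (∑ v : V, if u ∈ T ∧ H.Adj u v then 1 else 0)
        = if u ∈ T then degc H u else 0 := by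
      intro u
      by_cases hu : u ∈ T
      · simp only [hu, true_and, if_true, degc, Finset.card_filter]
      · simp [hu]
    simp only [h1]
    rw [Finset.sum_ite_mem, Finset.univ_inter]
  set B : Finset (V × V) := A.filter (fun p => p.2 ∈ T) with hB
  set P : Finset (V × V) := A.filter (fun p => ¬ p.2 ∈ T) with hP
  have hsplit : B.card + P.card = A.card := Finset.card_filter_add_card_filter_not _
  have hBeven : Even B.card := by
    have h0 : (∑ _p ∈ B, (1 : ZMod 2)) = 0 := by
      apply Finset.sum_involution (g := fun p _ => (p.2, p.1))
      · intro p _; decide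
      · intro p hp _
        rw [hB, Finset.mem_filter, hA, Finset.mem_filter] at hp
        obtain ⟨⟨-, hT1, hAdj⟩, hT2⟩ := hp
        intro hcon
        have h1 : p.2 = p.1 := congrArg Prod.fst hcon
        rw [h1] at hAdj
        exact H.loopless.irrefl _ hAdj
      · intro p hp
        rw [hB, Finset.mem_filter, hA, Finset.mem_filter] at hp ⊢
        obtain ⟨⟨-, hT1, hAdj⟩, hT2⟩ := hp
        exact ⟨⟨Finset.mem_univ _, hT2, hAdj.symm⟩, hT1⟩
      · intro p _; rfl
    have h1 : ((B.card : ℕ) : ZMod 2) = 0 := by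
      rw [← h0]; simp
    rw [even_iff_two_dvd]
    exact (ZMod.natCast_eq_zero_iff _ 2).mp h1
  have hPeq : {p : V × V | p.1 ∈ T ∧ p.2 ∉ T ∧ H.Adj p.1 p.2}.ncard = P.card := by
    rw [← Set.ncard_coe_finset]
    congr 1
    ext p
    simp only [hP, hA, Finset.coe_filter, Finset.mem_filter, Finset.mem_univ, true_and,
      Set.mem_setOf_eq]
    tauto
  rw [hPeq, ← hAcard, ← hsplit]
  have : P.card + (B.card + P.card) = B.card + 2 * P.card := by ring
  rw [this]
  exact hBeven.add (even_two_mul _)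

lemma cross_classify {V : Type*} (M : SimpleGraph V) (S : Set V) (a b a' b' : V)
    (haS : a ∈ S) (hbS : b ∉ S) (ha'S : a' ∈ S) (hb'S : b' ∉ S)
    (hcutset : edgeCut M S = {s(a, b), s(a', b')}) :
    ∀ u v : V, M.Adj u v → u ∈ S → v ∉ S → (u = a ∧ v = b) ∨ (u = a' ∧ v = b') := by
  intro u v hadj hu hv
  have hmem : s(u, v) ∈ edgeCut M S := ⟨u, v, rfl, hadj, hu, hv⟩
  rw [hcutset] at hmem
  rcases hmem with h | h
  · rcases Sym2.eq_iff.mp h with ⟨h1, h2⟩ | ⟨h1, h2⟩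
    · exact Or.inl ⟨h1, h2⟩
    · exact absurd (h1 ▸ hu) hbS
  · rcases Sym2.eq_iff.mp h with ⟨h1, h2⟩ | ⟨h1, h2⟩
    · exact Or.inr ⟨h1, h2⟩
    · exact absurd (h1 ▸ hu) hb'S

lemma reach_of_cut {V : Type*} [Fintype V] (M H : SimpleGraph V)
    (hle : ∀ u v, H.Adj u v → M.Adj u v)
    (hdeg : ∀ v, Even (degc H v))
    (S : Set V) (a b a' b' : V) (haS : a ∈ S) (hbS : b ∉ S) (ha'S : a' ∈ S) (hb'S : b' ∉ S)
    (hcutset : edgeCut M S = {s(a, b), s(a', b')})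
    (h1 : H.Adj a b) : H.Reachable a a' := by
  classical
  set T : Finset V := Finset.univ.filter (fun v => H.Reachable a v ∧ v ∈ S) with hT
  have hpar := parity_core H T
  have hdegsum : Even (∑ u ∈ T, degc H u) := Finset.even_sum _ (fun u _ => hdeg u)
  have hPeven : Even ({p : V × V | p.1 ∈ T ∧ p.2 ∉ T ∧ H.Adj p.1 p.2}.ncard) :=
    (Nat.even_add.mp hpar).mpr hdegsum
  set P : Set (V × V) := {p : V × V | p.1 ∈ T ∧ p.2 ∉ T ∧ H.Adj p.1 p.2} with hPdef
  have hTmem : ∀ v, v ∈ T ↔ H.Reachable a v ∧ v ∈ S := by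
    intro v; simp [hT]
  have hsub : P ⊆ {(a, b), (a', b')} := by
    rintro ⟨u, v⟩ ⟨hu, hv, hadj⟩
    obtain ⟨hru, huS⟩ := (hTmem u).mp hu
    have hrv : H.Reachable a v := hru.trans hadj.reachable
    have hvS : v ∉ S := fun h => hv ((hTmem v).mpr ⟨hrv, h⟩)
    rcases cross_classify M S a b a' b' haS hbS ha'S hb'S hcutset u v (hle u v hadj) huS hvS with
      ⟨h1, h2⟩ | ⟨h1, h2⟩
    · exact Or.inl (by simp [h1, h2])
    · exact Or.inr (by simp [h1, h2])
  have hmem1 : (a, b) ∈ P := by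
    refine ⟨(hTmem a).mpr ⟨SimpleGraph.Reachable.refl a, haS⟩, ?_, h1⟩
    exact fun h => hbS ((hTmem b).mp h).2
  by_cases hmem2 : (a', b') ∈ P
  · exact (((hTmem a').mp hmem2.1).1)
  · exfalso
    have hPeq : P = {(a, b)} := by
      apply Set.eq_of_subset_of_ncard_le
      · intro p hp
        rcases hsub hp with h | h
        · exact h
        · exact absurd (h ▸ hp) hmem2
      · simp [Set.ncard_singleton]
        have : ({(a,b)} : Set (V × V)) ⊆ P := by simp [hmem1]
        calc 1 = ({(a,b)} : Set (V × V)).ncard := (Set.ncard_singleton _).symm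
          _ ≤ P.ncard := Set.ncard_le_ncard this (Set.toFinite _)
      · exact Set.toFinite _
    rw [hPeq, Set.ncard_singleton] at hPeven
    exact (Nat.not_even_iff_odd.mpr odd_one) hPeven

end Aux
section Aux2

open Colour

lemma edge_ne_of_ne {V : Type*} {v u1 u2 : V} (h : u1 ≠ u2) : s(v, u1) ≠ s(v, u2) := by
  intro h'
  rcases Sym2.eq_iff.mp h' with ⟨-, h2⟩ | ⟨h1, h2⟩
  · exact h h2
  · exact h (h2.trans h1)

/-- Every vertex of a gem has exactly one incident edge of each colour. -/
lemma gem_rainbow {V : Type*} (M : SimpleGraph V) (c : Sym2 V → Colour) (hgem : IsGem M c) :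
    ∀ v x, ∃! u, M.Adj v u ∧ c s(v, u) = x := by
  intro v x
  obtain ⟨n1, n2, n3, h12, h13, h23, hset⟩ := Set.ncard_eq_three.mp (hgem.cubic v)
  have hadj : ∀ u, u ∈ ({n1, n2, n3} : Set V) → M.Adj v u := by
    intro u hu
    have : u ∈ M.neighborSet v := hset ▸ hu
    exact this
  have ha1 : M.Adj v n1 := hadj n1 (by simp)
  have ha2 : M.Adj v n2 := hadj n2 (by simp)
  have ha3 : M.Adj v n3 := hadj n3 (by simp)
  have hcol : ∀ u1 u2, M.Adj v u1 → M.Adj v u2 → u1 ≠ u2 → c s(v, u1) ≠ c s(v, u2) := by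
    intro u1 u2 hu1 hu2 hne
    exact hgem.proper _ ((M.mem_edgeSet).mpr hu1) _ ((M.mem_edgeSet).mpr hu2)
      (edge_ne_of_ne hne) ⟨v, by simp, by simp⟩
  have huniq : ∀ u1 u2, (M.Adj v u1 ∧ c s(v, u1) = x) → (M.Adj v u2 ∧ c s(v, u2) = x) →
      u1 = u2 := by
    intro u1 u2 ⟨h1, e1⟩ ⟨h2, e2⟩
    by_contra hne
    exact hcol u1 u2 h1 h2 hne (e1.trans e2.symm)
  have hx := colour_cover x (c s(v, n1)) (c s(v, n2)) (c s(v, n3))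
    (hcol _ _ ha1 ha2 h12) (hcol _ _ ha1 ha3 h13) (hcol _ _ ha2 ha3 h23)
  rcases hx with h | h | h
  · exact ⟨n1, ⟨ha1, h.symm⟩, fun u hu => huniq u n1 hu ⟨ha1, h.symm⟩⟩
  · exact ⟨n2, ⟨ha2, h.symm⟩, fun u hu => huniq u n2 hu ⟨ha2, h.symm⟩⟩
  · exact ⟨n3, ⟨ha3, h.symm⟩, fun u hu => huniq u n3 hu ⟨ha3, h.symm⟩⟩

lemma rainbow_of_three {V : Type*} (M : SimpleGraph V) (c'' : Sym2 V → Colour) (v r y b : V)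
    (har : M.Adj v r) (hay : M.Adj v y) (hab : M.Adj v b)
    (hcr : c'' s(v, r) = red) (hcy : c'' s(v, y) = yellow) (hcb : c'' s(v, b) = blue)
    (hcov : ∀ u, M.Adj v u → u = r ∨ u = y ∨ u = b) :
    ∀ x, ∃! u, M.Adj v u ∧ c'' s(v, u) = x := by
  intro x
  cases x with
  | red =>
    refine ⟨r, ⟨har, hcr⟩, fun u ⟨hu, hcu⟩ => ?_⟩
    rcases hcov u hu with h | h | h
    · exact h
    · subst h; exact absurd (hcu.symm.trans hcy) (by decide)
    · subst h; exact absurd (hcu.symm.trans hcb) (by decide)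
  | yellow =>
    refine ⟨y, ⟨hay, hcy⟩, fun u ⟨hu, hcu⟩ => ?_⟩
    rcases hcov u hu with h | h | h
    · subst h; exact absurd (hcu.symm.trans hcr) (by decide)
    · exact h
    · subst h; exact absurd (hcu.symm.trans hcb) (by decide)
  | blue =>
    refine ⟨b, ⟨hab, hcb⟩, fun u ⟨hu, hcu⟩ => ?_⟩
    rcases hcov u hu with h | h | h
    · subst h; exact absurd (hcu.symm.trans hcr) (by decide)
    · subst h; exact absurd (hcu.symm.trans hcy) (by decide)
    · exact h

lemma mem_D_colour {V : Type*} {M : SimpleGraph V} {c : Sym2 V → Colour} {D : Set (Sym2 V)}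
    (hD : UnionOfRBComponents M c D) {u w : V} (h : s(u, w) ∈ D) :
    c s(u, w) = red ∨ c s(u, w) = blue := by
  have := hD.1 h
  rw [SimpleGraph.mem_edgeSet] at this
  exact this.2

lemma swap_rainbow {V : Type*} (M : SimpleGraph V) (c : Sym2 V → Colour) (hgem : IsGem M c)
    (D : Set (Sym2 V)) (hD : UnionOfRBComponents M c D) :
    ∀ v x, ∃! u, M.Adj v u ∧ swapRB c D s(v, u) = x := by
  intro v
  obtain ⟨r, ⟨har, hcr⟩, hur⟩ := gem_rainbow M c hgem v red
  obtain ⟨y, ⟨hay, hcy⟩, huy⟩ := gem_rainbow M c hgem v yellow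
  obtain ⟨b, ⟨hab, hcb⟩, hub⟩ := gem_rainbow M c hgem v blue
  have hcov : ∀ u, M.Adj v u → u = r ∨ u = y ∨ u = b := by
    intro u hu
    cases h : c s(v, u) with
    | red => exact Or.inl (hur u ⟨hu, h⟩)
    | yellow => exact Or.inr (Or.inl (huy u ⟨hu, h⟩))
    | blue => exact Or.inr (Or.inr (hub u ⟨hu, h⟩))
  have hyD : s(v, y) ∉ D := by
    intro h
    rcases mem_D_colour hD h with h' | h' <;> rw [hcy] at h' <;> exact absurd h' (by decide)
  have hyc : swapRB c D s(v, y) = yellow := by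
    rw [swapRB, if_neg hyD, hcy]
  have hrRB : s(v, r) ∈ (twoColourSubgraph M c red blue).edgeSet :=
    (SimpleGraph.mem_edgeSet _).mpr ⟨har, Or.inl hcr⟩
  have hbRB : s(v, b) ∈ (twoColourSubgraph M c red blue).edgeSet :=
    (SimpleGraph.mem_edgeSet _).mpr ⟨hab, Or.inr hcb⟩
  have hiff : s(v, r) ∈ D ↔ s(v, b) ∈ D :=
    hD.2 _ hrRB _ hbRB ⟨v, v, by simp, by simp, SimpleGraph.Reachable.refl v⟩
  by_cases hrD : s(v, r) ∈ D
  · have hbD : s(v, b) ∈ D := hiff.mp hrD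
    have h1 : swapRB c D s(v, b) = red := by rw [swapRB, if_pos hbD, hcb]; rfl
    have h2 : swapRB c D s(v, r) = blue := by rw [swapRB, if_pos hrD, hcr]; rfl
    exact rainbow_of_three M _ v b y r hab hay har h1 hyc h2
      (fun u hu => by rcases hcov u hu with h | h | h <;> tauto)
  · have hbD : s(v, b) ∉ D := fun h => hrD (hiff.mpr h)
    have h1 : swapRB c D s(v, r) = red := by rw [swapRB, if_neg hrD, hcr]
    have h2 : swapRB c D s(v, b) = blue := by rw [swapRB, if_neg hbD, hcb]
    exact rainbow_of_three M _ v r y b har hay hab h1 hyc h2 hcov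

lemma degc_two {V : Type*} [Fintype V] (M : SimpleGraph V) (c'' : Sym2 V → Colour)
    (hrb : ∀ v x, ∃! u, M.Adj v u ∧ c'' s(v, u) = x) (x y : Colour) (hxy : x ≠ y) (v : V) :
    degc (twoColourSubgraph M c'' x y) v = 2 := by
  classical
  obtain ⟨ux, ⟨hux, hcx⟩, hu1⟩ := hrb v x
  obtain ⟨uy, ⟨huy, hcy⟩, hu2⟩ := hrb v y
  have hne : ux ≠ uy := by
    intro h
    rw [h] at hcx
    exact hxy (hcx.symm.trans hcy)
  rw [degc]
  have : (@Finset.filter _ (fun u => (twoColourSubgraph M c'' x y).Adj v u)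
      (Classical.decPred _) Finset.univ) = {ux, uy} := by
    ext w
    simp only [Finset.mem_filter, Finset.mem_univ, true_and, Finset.mem_insert,
      Finset.mem_singleton]
    constructor
    · rintro ⟨hw, hc | hc⟩
      · exact Or.inl (hu1 w ⟨hw, hc⟩)
      · exact Or.inr (hu2 w ⟨hw, hc⟩)
    · rintro (rfl | rfl)
      · exact ⟨hux, Or.inl hcx⟩
      · exact ⟨huy, Or.inr hcy⟩
  rw [this, Finset.card_insert_of_notMem (by simp [hne]), Finset.card_singleton]

lemma degc_mono {V : Type*} [Fintype V] (M : SimpleGraph V) (c'' : Sym2 V → Colour)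
    (hrb : ∀ v x, ∃! u, M.Adj v u ∧ c'' s(v, u) = x) (x : Colour) (v : V) :
    degc (twoColourSubgraph M c'' x x) v = 1 := by
  classical
  obtain ⟨ux, ⟨hux, hcx⟩, hu1⟩ := hrb v x
  rw [degc, Finset.card_eq_one]
  refine ⟨ux, ?_⟩
  ext w
  simp only [Finset.mem_filter, Finset.mem_univ, true_and, Finset.mem_singleton]
  constructor
  · rintro ⟨hw, hc | hc⟩ <;> exact hu1 w ⟨hw, hc⟩
  · rintro rfl
    exact ⟨hux, Or.inl hcx⟩

lemma swap_rb_eq {V : Type*} (M : SimpleGraph V) (c : Sym2 V → Colour) (D : Set (Sym2 V)) :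
    twoColourSubgraph M (swapRB c D) red blue = twoColourSubgraph M c red blue := by
  ext u v
  show M.Adj u v ∧ _ ↔ M.Adj u v ∧ _
  apply and_congr_right
  intro _
  rw [swapRB]
  by_cases h : s(u, v) ∈ D
  · rw [if_pos h]
    cases hc : c s(u, v) <;> simp [swapColour]
  · rw [if_neg h]

end Aux2
section Aux3

open Colour

lemma cut_colours_eq {V : Type*} [Fintype V] (M : SimpleGraph V) (c'' : Sym2 V → Colour)
    (hrb : ∀ v x, ∃! u, M.Adj v u ∧ c'' s(v, u) = x)
    (S : Set V) (a b a' b' : V)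
    (haS : a ∈ S) (hbS : b ∉ S) (ha'S : a' ∈ S) (hb'S : b' ∉ S)
    (hcutset : edgeCut M S = {s(a, b), s(a', b')})
    (hadj : M.Adj a b) (hadj' : M.Adj a' b') :
    c'' s(a, b) = c'' s(a', b') := by
  classical
  by_contra hne'
  set T : Finset V := Finset.univ.filter (fun v => v ∈ S) with hT
  have hTmem : ∀ v, v ∈ T ↔ v ∈ S := by intro v; simp [hT]
  -- parity for a single colour class
  have key : ∀ x : Colour,
      Even ({p : V × V | p.1 ∈ T ∧ p.2 ∉ T ∧ (twoColourSubgraph M c'' x x).Adj p.1 p.2}.ncard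
        + T.card) := by
    intro x
    have := parity_core (twoColourSubgraph M c'' x x) T
    have hsum : (∑ u ∈ T, degc (twoColourSubgraph M c'' x x) u) = T.card := by
      rw [Finset.sum_congr rfl (fun u _ => degc_mono M c'' hrb x u), Finset.sum_const,
        smul_eq_mul, mul_one]
    rwa [hsum] at this
  have hclass : ∀ x : Colour, ∀ p : V × V,
      p ∈ {p : V × V | p.1 ∈ T ∧ p.2 ∉ T ∧ (twoColourSubgraph M c'' x x).Adj p.1 p.2} →
      (p = (a, b) ∧ c'' s(a, b) = x) ∨ (p = (a', b') ∧ c'' s(a', b') = x) := by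
    rintro x ⟨u, v⟩ ⟨hu, hv, hadjuv, hcuv⟩
    have hcx : c'' s(u, v) = x := by rcases hcuv with h | h <;> exact h
    rcases cross_classify M S a b a' b' haS hbS ha'S hb'S hcutset u v hadjuv
      ((hTmem u).mp hu) (fun h => hv ((hTmem v).mpr h)) with ⟨h1, h2⟩ | ⟨h1, h2⟩
    · subst h1; subst h2; exact Or.inl ⟨rfl, hcx⟩
    · subst h1; subst h2; exact Or.inr ⟨rfl, hcx⟩
  obtain ⟨z, hz1, hz2⟩ := exists_third (c'' s(a, b)) (c'' s(a', b'))
  -- the z-class has no crossing pairs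
  have hzempty : {p : V × V | p.1 ∈ T ∧ p.2 ∉ T ∧ (twoColourSubgraph M c'' z z).Adj p.1 p.2}
      = (∅ : Set (V × V)) := by
    ext p
    simp only [Set.mem_empty_iff_false, iff_false]
    intro hp
    rcases hclass z p hp with ⟨-, h⟩ | ⟨-, h⟩
    · exact hz1 h.symm
    · exact hz2 h.symm
  have hTeven : Even T.card := by
    have := key z
    rwa [hzempty, Set.ncard_empty, zero_add] at this
  -- the class of the first cut edge contains exactly the pair (a, b)
  set x1 := c'' s(a, b) with hx1
  have hx1set : {p : V × V | p.1 ∈ T ∧ p.2 ∉ T ∧ (twoColourSubgraph M c'' x1 x1).Adj p.1 p.2}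
      = {(a, b)} := by
    ext p
    simp only [Set.mem_singleton_iff]
    constructor
    · intro hp
      rcases hclass x1 p hp with ⟨h, -⟩ | ⟨-, h⟩
      · exact h
      · exact absurd h.symm hne'
    · rintro rfl
      exact ⟨(hTmem a).mpr haS, fun h => hbS ((hTmem b).mp h), hadj, Or.inl rfl⟩
  have := key x1
  rw [hx1set, Set.ncard_singleton] at this
  rw [Nat.even_add] at this
  have h1 : Even 1 := this.mpr hTeven
  exact (Nat.not_even_iff_odd.mpr odd_one) h1

end Aux3
section Aux4

open Colour

lemma main_case {V : Type*} [Fintype V] (M : SimpleGraph V) (c : Sym2 V → Colour)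
    (hgem : IsGem M c) (D : Set (Sym2 V)) (hD : UnionOfRBComponents M c D)
    (S : Set V) (a b a' b' : V)
    (haS : a ∈ S) (hbS : b ∉ S) (ha'S : a' ∈ S) (hb'S : b' ∉ S)
    (hcutset : edgeCut M S = {s(a, b), s(a', b')}) (hne : s(a, b) ≠ s(a', b'))
    (hadj : M.Adj a b) (hadj' : M.Adj a' b')
    (x z : Colour) (hx : x = red ∨ x = blue) (hz : z = red ∨ z = blue) (hxz : x ≠ z)
    (hce1 : swapRB c D s(a, b) = x) (hce2 : swapRB c D s(a', b') = x) :
    ∃ g1 g2 : Sym2 V, g1 ≠ g2 ∧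
      (g1 ∈ (twoColourSubgraph M (swapRB c D) x yellow).edgeSet ∧
       g2 ∈ (twoColourSubgraph M (swapRB c D) x yellow).edgeSet ∧
       ∃ u v, u ∈ g1 ∧ v ∈ g2 ∧
         (twoColourSubgraph M (swapRB c D) x yellow).Reachable u v) ∧
      (g1 ∈ (twoColourSubgraph M (swapRB c D) z yellow).edgeSet ∧
       g2 ∈ (twoColourSubgraph M (swapRB c D) z yellow).edgeSet ∧
       ∃ u v, u ∈ g1 ∧ v ∈ g2 ∧
         (twoColourSubgraph M (swapRB c D) z yellow).Reachable u v) := by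
  classical
  set c' := swapRB c D with hc'
  have hrb : ∀ (v : V) (x : Colour), ∃! u, M.Adj v u ∧ c' s(v, u) = x :=
    swap_rainbow M c hgem D hD
  have hxy : x ≠ yellow := by rcases hx with rfl | rfl <;> decide
  have hzy : z ≠ yellow := by rcases hz with rfl | rfl <;> decide
  have hab_ne : a ≠ b := hadj.ne
  have ha'b'_ne : a' ≠ b' := hadj'.ne
  have hab' : a ≠ b' := fun h => hb'S (h ▸ haS)
  have ha'b : a' ≠ b := fun h => hbS (h ▸ ha'S)
  have haa' : a ≠ a' := by
    intro h
    subst h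
    obtain ⟨w, -, hwu⟩ := hrb a x
    have hbb' : b = b' := (hwu b ⟨hadj, hce1⟩).trans (hwu b' ⟨hadj', hce2⟩).symm
    exact hne (by rw [hbb'])
  have hbb' : b ≠ b' := by
    intro h
    subst h
    obtain ⟨w, -, hwu⟩ := hrb b x
    have hce1' : c' s(b, a) = x := by rwa [Sym2.eq_swap] at hce1
    have hce2' : c' s(b, a') = x := by rwa [Sym2.eq_swap] at hce2
    have h1 : a = a' := (hwu a ⟨hadj.symm, hce1'⟩).trans (hwu a' ⟨hadj'.symm, hce2'⟩).symm
    exact hne (by rw [h1])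
  set RB := twoColourSubgraph M c' red blue with hRB
  have hRBdeg : ∀ v, Even (degc RB v) := by
    intro v
    rw [hRB, degc_two M c' hrb red blue (by decide) v]
    exact ⟨1, rfl⟩
  have hRBab : RB.Adj a b := ⟨hadj, by rw [hce1]; exact hx⟩
  have hRBa'b' : RB.Adj a' b' := ⟨hadj', by rw [hce2]; exact hx⟩
  have hreach : RB.Reachable a a' :=
    reach_of_cut M RB (fun u v h => h.1) hRBdeg S a b a' b' haS hbS ha'S hb'S hcutset hRBab
  set K := (RB.connectedComponentMk a).supp with hK
  have hK4 : K.ncard = 4 := by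
    rw [hK, hRB, hc', swap_rb_eq]
    exact hgem.rb_components_card4 a
  have hmemK : ∀ w, RB.Reachable w a → w ∈ K := fun w h =>
    (SimpleGraph.ConnectedComponent.mem_supp_iff _ _).mpr (SimpleGraph.ConnectedComponent.sound h)
  have hsub : ({a, b, a', b'} : Set V) ⊆ K := by
    intro w hw
    simp only [Set.mem_insert_iff, Set.mem_singleton_iff] at hw
    rcases hw with rfl | rfl | rfl | rfl
    · exact hmemK w (SimpleGraph.Reachable.refl w)
    · exact hmemK _ hRBab.symm.reachable
    · exact hmemK _ hreach.symm
    · exact hmemK _ (hRBa'b'.symm.reachable.trans hreach.symm)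
  have hquad : ({a, b, a', b'} : Set V).ncard = 4 := by
    rw [Set.ncard_insert_of_notMem (by simp [hab_ne, haa', hab']),
      Set.ncard_insert_of_notMem (by simp [ha'b.symm, hbb']),
      Set.ncard_pair ha'b'_ne]
  have hKeq : ({a, b, a', b'} : Set V) = K :=
    Set.eq_of_subset_of_ncard_le hsub (by rw [hK4, hquad]) (Set.toFinite _)
  obtain ⟨w, ⟨hwadj, hwz⟩, -⟩ := hrb a z
  have hRBaw : RB.Adj a w := ⟨hwadj, by rw [hwz]; exact hz⟩
  have hwK : w ∈ K := hmemK w hRBaw.symm.reachable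
  have hwmem : w = a ∨ w = b ∨ w = a' ∨ w = b' := by
    have hw2 : w ∈ ({a, b, a', b'} : Set V) := hKeq ▸ hwK
    simpa using hw2
  have hwa : w ≠ a := hwadj.ne'
  have hwb : w ≠ b := by
    intro h
    rw [h] at hwz
    exact hxz (hce1.symm.trans hwz)
  have hwb' : w ≠ b' := by
    intro h
    rw [h] at hwadj
    rcases cross_classify M S a b a' b' haS hbS ha'S hb'S hcutset a b' hwadj haS hb'S with
      ⟨-, h2⟩ | ⟨h1, -⟩
    · exact hbb' h2.symm
    · exact haa' h1
  have hwa' : w = a' := by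
    rcases hwmem with h | h | h | h
    · exact absurd h hwa
    · exact absurd h hwb
    · exact h
    · exact absurd h hwb'
  rw [hwa'] at hwz hwadj
  obtain ⟨p, ⟨hpadj, hpy⟩, -⟩ := hrb a yellow
  obtain ⟨q, ⟨hqadj, hqy⟩, -⟩ := hrb a' yellow
  have hg12 : s(a, p) ≠ s(a', q) := by
    intro h
    have ha'mem : a' ∈ s(a, p) := by
      rw [h]
      exact Sym2.mem_iff.mpr (Or.inl rfl)
    rcases Sym2.mem_iff.mp ha'mem with h1 | h1
    · exact haa' h1.symm
    · rw [← h1] at hpy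
      exact hzy (hwz.symm.trans hpy)
  refine ⟨s(a, p), s(a', q), hg12, ⟨?_, ?_, a, a', ?_, ?_, ?_⟩, ⟨?_, ?_, a, a', ?_, ?_, ?_⟩⟩
  · exact (SimpleGraph.mem_edgeSet _).mpr ⟨hpadj, Or.inr hpy⟩
  · exact (SimpleGraph.mem_edgeSet _).mpr ⟨hqadj, Or.inr hqy⟩
  · exact Sym2.mem_iff.mpr (Or.inl rfl)
  · exact Sym2.mem_iff.mpr (Or.inl rfl)
  · exact reach_of_cut M (twoColourSubgraph M c' x yellow) (fun u v h => h.1)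
      (fun v => by rw [degc_two M c' hrb x yellow hxy v]; exact ⟨1, rfl⟩)
      S a b a' b' haS hbS ha'S hb'S hcutset ⟨hadj, Or.inl hce1⟩
  · exact (SimpleGraph.mem_edgeSet _).mpr ⟨hpadj, Or.inr hpy⟩
  · exact (SimpleGraph.mem_edgeSet _).mpr ⟨hqadj, Or.inr hqy⟩
  · exact Sym2.mem_iff.mpr (Or.inl rfl)
  · exact Sym2.mem_iff.mpr (Or.inl rfl)
  · exact SimpleGraph.Adj.reachable ⟨hwadj, Or.inl hwz⟩

end Aux4
/-- If a gem with more than 4 vertices has a 2-edge cut, then after swapping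
red and blue on any union of connected components of the red-blue spanning
subgraph (a partial dual), there are a connected component of the red-yellow
spanning subgraph and a connected component of the blue-yellow spanning
subgraph (under the new colouring) sharing at least two edges: there are two
distinct edges `g1, g2` lying in a common red-yellow component and in a common
blue-yellow component.  (So the partial dual embedding has a bad vertex/face
pair and is not closed 2-cell.) -/
theorem swapRB_bad_pair {V : Type*} [Fintype V]
    (M : SimpleGraph V) (c : Sym2 V → Colour) (hgem : IsGem M c)
    (hcard : 4 < Fintype.card V)
    (hcut : ∃ S : Set V, S.Nonempty ∧ Sᶜ.Nonempty ∧ (edgeCut M S).ncard = 2)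
    (D : Set (Sym2 V)) (hD : UnionOfRBComponents M c D) :
    ∃ g1 g2 : Sym2 V, g1 ≠ g2 ∧
      (g1 ∈ (twoColourSubgraph M (swapRB c D) Colour.red Colour.yellow).edgeSet ∧
       g2 ∈ (twoColourSubgraph M (swapRB c D) Colour.red Colour.yellow).edgeSet ∧
       ∃ u v, u ∈ g1 ∧ v ∈ g2 ∧
         (twoColourSubgraph M (swapRB c D) Colour.red Colour.yellow).Reachable u v) ∧
      (g1 ∈ (twoColourSubgraph M (swapRB c D) Colour.blue Colour.yellow).edgeSet ∧
       g2 ∈ (twoColourSubgraph M (swapRB c D) Colour.blue Colour.yellow).edgeSet ∧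
       ∃ u v, u ∈ g1 ∧ v ∈ g2 ∧
         (twoColourSubgraph M (swapRB c D) Colour.blue Colour.yellow).Reachable u v) := by
  classical
  obtain ⟨S, -, -, hcut2⟩ := hcut
  obtain ⟨e1, e2, hne12, hset⟩ := Set.ncard_eq_two.mp hcut2
  have he1 : e1 ∈ edgeCut M S := by rw [hset]; exact Set.mem_insert _ _
  have he2 : e2 ∈ edgeCut M S := by rw [hset]; exact Set.mem_insert_of_mem _ rfl
  obtain ⟨a, b, he1eq, hab, haS, hbS⟩ := he1
  obtain ⟨a', b', he2eq, hab', ha'S, hb'S⟩ := he2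
  subst he1eq
  subst he2eq
  have hrb : ∀ (v : V) (x : Colour), ∃! u, M.Adj v u ∧ swapRB c D s(v, u) = x :=
    swap_rainbow M c hgem D hD
  have hcol : swapRB c D s(a, b) = swapRB c D s(a', b') :=
    cut_colours_eq M (swapRB c D) hrb S a b a' b' haS hbS ha'S hb'S hset hab hab'
  cases hx : swapRB c D s(a, b) with
  | yellow =>
    have hce2 : swapRB c D s(a', b') = Colour.yellow := hcol.symm.trans hx
    refine ⟨s(a, b), s(a', b'), hne12, ⟨?_, ?_, a, a', ?_, ?_, ?_⟩, ⟨?_, ?_, a, a', ?_, ?_, ?_⟩⟩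
    · exact (SimpleGraph.mem_edgeSet _).mpr ⟨hab, Or.inr hx⟩
    · exact (SimpleGraph.mem_edgeSet _).mpr ⟨hab', Or.inr hce2⟩
    · exact Sym2.mem_iff.mpr (Or.inl rfl)
    · exact Sym2.mem_iff.mpr (Or.inl rfl)
    · exact reach_of_cut M (twoColourSubgraph M (swapRB c D) Colour.red Colour.yellow)
        (fun u v h => h.1)
        (fun v => by
          rw [degc_two M _ hrb Colour.red Colour.yellow (by decide) v]; exact ⟨1, rfl⟩)
        S a b a' b' haS hbS ha'S hb'S hset ⟨hab, Or.inr hx⟩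
    · exact (SimpleGraph.mem_edgeSet _).mpr ⟨hab, Or.inr hx⟩
    · exact (SimpleGraph.mem_edgeSet _).mpr ⟨hab', Or.inr hce2⟩
    · exact Sym2.mem_iff.mpr (Or.inl rfl)
    · exact Sym2.mem_iff.mpr (Or.inl rfl)
    · exact reach_of_cut M (twoColourSubgraph M (swapRB c D) Colour.blue Colour.yellow)
        (fun u v h => h.1)
        (fun v => by
          rw [degc_two M _ hrb Colour.blue Colour.yellow (by decide) v]; exact ⟨1, rfl⟩)
        S a b a' b' haS hbS ha'S hb'S hset ⟨hab, Or.inr hx⟩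
  | red =>
    have hce2 : swapRB c D s(a', b') = Colour.red := hcol.symm.trans hx
    obtain ⟨g1, g2, h12, hA, hB⟩ := main_case M c hgem D hD S a b a' b' haS hbS ha'S hb'S
      hset hne12 hab hab' Colour.red Colour.blue (Or.inl rfl) (Or.inr rfl) (by decide) hx hce2
    exact ⟨g1, g2, h12, hA, hB⟩
  | blue =>
    have hce2 : swapRB c D s(a', b') = Colour.blue := hcol.symm.trans hx
    obtain ⟨g1, g2, h12, hA, hB⟩ := main_case M c hgem D hD S a b a' b' haS hbS ha'S hb'S
      hset hne12 hab hab' Colour.blue Colour.red (Or.inr rfl) (Or.inl rfl) (by decide) hx hce2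
    exact ⟨g1, g2, h12, hB, hA⟩
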